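/- Under the rank condition rank[F_k; H_k] = n for all k (stacked (m+p)×n matrix has full column rank) and with R_k = E, S_k = E, the matrices P_k defined by P_0 = F_0'F_0 + H_0'H_0 and P_k = H_k'H_k + F_k'[E − C_{k-1}(P_{k-1} + C_{k-1}'C_{k-1})^{-1}C_{k-1}']F_k are symmetric positive definite (hence invertible), and P_k^{-1} = P_{k|k} where P_{0|0}^{-1} = F_0'F_0 + H_0'H_0, A_k^{-1} = E + C_k P_{k|k} C_k', and P_{k|k}^{-1} = F_k' A_{k-1} F_k + H_k' H_k. That is, the minimax recursion for P_k coincides with the Kalman-type information matrix recursion for descriptor systems. -/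

import Mathlib

open Matrix

/-- Full column rank ⇒ no common kernel of F and H. -/
lemma aux_rank_inj {m n q : ℕ} (F : Matrix (Fin m) (Fin n) ℝ)
    (H : Matrix (Fin q) (Fin n) ℝ) (hr : (Matrix.fromRows F H).rank = n)
    {x : Fin n → ℝ} (hx : x ≠ 0) : ¬ (F *ᵥ x = 0 ∧ H *ᵥ x = 0) := by
  rintro ⟨hF, hH⟩
  have hker : (Matrix.fromRows F H).mulVecLin x = 0 := by
    have : (Matrix.fromRows F H) *ᵥ x = 0 := by
      rw [Matrix.fromRows_mulVec, hF, hH]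
      ext (i | i) <;> rfl
    simpa [Matrix.mulVecLin_apply] using this
  have hrange : Module.finrank ℝ (LinearMap.range (Matrix.fromRows F H).mulVecLin)
      + Module.finrank ℝ (LinearMap.ker (Matrix.fromRows F H).mulVecLin)
      = Module.finrank ℝ (Fin n → ℝ) := LinearMap.finrank_range_add_finrank_ker _
  rw [show Module.finrank ℝ (LinearMap.range (Matrix.fromRows F H).mulVecLin)
      = (Matrix.fromRows F H).rank from rfl, hr, Module.finrank_fin_fun] at hrange
  have hker0 : Module.finrank ℝ (LinearMap.ker (Matrix.fromRows F H).mulVecLin) = 0 := by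
    omega
  have : LinearMap.ker (Matrix.fromRows F H).mulVecLin = ⊥ :=
    Submodule.finrank_eq_zero.mp hker0
  exact hx (by simpa [this] using (LinearMap.mem_ker.mpr hker))

/-- Key positive definiteness lemma. -/
lemma aux_posDef {m n q : ℕ} (F : Matrix (Fin m) (Fin n) ℝ)
    (H : Matrix (Fin q) (Fin n) ℝ) (M : Matrix (Fin m) (Fin m) ℝ)
    (hM : M.PosDef) (hr : (Matrix.fromRows F H).rank = n) :
    (Hᵀ * H + Fᵀ * M * F).PosDef := by
  rw [Matrix.posDef_iff_dotProduct_mulVec]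
  constructor
  · have h1 : (Hᵀ * H).IsHermitian := by
      have := Matrix.isHermitian_conjTranspose_mul_self H
      simpa [Matrix.conjTranspose_eq_transpose_of_trivial] using this
    have h2 : (Fᵀ * M * F).IsHermitian := by
      have := Matrix.isHermitian_conjTranspose_mul_mul F hM.isHermitian
      simpa [Matrix.conjTranspose_eq_transpose_of_trivial] using this
    exact h1.add h2
  · intro x hx
    have key1 : x ⬝ᵥ ((Hᵀ * H) *ᵥ x) = (H *ᵥ x) ⬝ᵥ (H *ᵥ x) := by
      rw [← Matrix.mulVec_mulVec, Matrix.dotProduct_mulVec, Matrix.vecMul_transpose]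
    have key2 : x ⬝ᵥ ((Fᵀ * M * F) *ᵥ x) = (F *ᵥ x) ⬝ᵥ (M *ᵥ (F *ᵥ x)) := by
      rw [Matrix.mul_assoc, ← Matrix.mulVec_mulVec,
        Matrix.dotProduct_mulVec, Matrix.vecMul_transpose, ← Matrix.mulVec_mulVec]
    have hnz := aux_rank_inj F H hr hx
    simp only [star_trivial, Matrix.add_mulVec, dotProduct_add, key1, key2]
    by_cases hF : F *ᵥ x = 0
    · have hH : H *ᵥ x ≠ 0 := fun h => hnz ⟨hF, h⟩
      have h1 : 0 < (H *ᵥ x) ⬝ᵥ (H *ᵥ x) := by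
        have := Matrix.dotProduct_star_self_pos_iff (R := ℝ) (v := H *ᵥ x)
        simpa [star_trivial] using this.mpr hH
      have h2 : (0:ℝ) ≤ (F *ᵥ x) ⬝ᵥ (M *ᵥ (F *ᵥ x)) := by
        have := hM.posSemidef.dotProduct_mulVec_nonneg (F *ᵥ x)
        simpa [star_trivial] using this
      linarith
    · have h1 : (0:ℝ) ≤ (H *ᵥ x) ⬝ᵥ (H *ᵥ x) := by
        have := dotProduct_star_self_nonneg (H *ᵥ x)
        simpa [star_trivial] using this
      have h2 : 0 < (F *ᵥ x) ⬝ᵥ (M *ᵥ (F *ᵥ x)) := by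
        have := hM.dotProduct_mulVec_pos hF
        simpa [star_trivial] using this
      linarith

/-- Woodbury-type identity. -/
lemma aux_wood {m n : ℕ} (P : Matrix (Fin n) (Fin n) ℝ)
    (C : Matrix (Fin m) (Fin n) ℝ) (hP : P.PosDef) :
    (1 + C * P⁻¹ * Cᵀ)⁻¹ = 1 - C * (P + Cᵀ * C)⁻¹ * Cᵀ := by
  have hCC : (Cᵀ * C).PosSemidef := by
    have := Matrix.posSemidef_conjTranspose_mul_self C
    simpa [Matrix.conjTranspose_eq_transpose_of_trivial] using this
  have hS : (P + Cᵀ * C).PosDef := hP.add_posSemidef hCC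
  set S := P + Cᵀ * C with hSdef
  have hSdet : IsUnit S.det := (Matrix.isUnit_iff_isUnit_det S).mp hS.isUnit
  have hPdet : IsUnit P.det := (Matrix.isUnit_iff_isUnit_det P).mp hP.isUnit
  apply Matrix.inv_eq_right_inv
  have hkey : C * P⁻¹ * (Cᵀ * C) * S⁻¹ * Cᵀ = C * P⁻¹ * Cᵀ - C * S⁻¹ * Cᵀ := by
    have h1 : Cᵀ * C = S - P := by rw [hSdef]; abel
    rw [h1, Matrix.mul_sub, Matrix.sub_mul, Matrix.sub_mul]
    rw [show C * P⁻¹ * S * S⁻¹ = C * P⁻¹ * (S * S⁻¹) from Matrix.mul_assoc _ _ _,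
      Matrix.mul_nonsing_inv _ hSdet, Matrix.mul_one,
      show C * P⁻¹ * P = C * (P⁻¹ * P) from Matrix.mul_assoc _ _ _,
      Matrix.nonsing_inv_mul _ hPdet, Matrix.mul_one]
  have hAB : (C * P⁻¹ * Cᵀ) * (C * S⁻¹ * Cᵀ) = C * P⁻¹ * Cᵀ - C * S⁻¹ * Cᵀ := by
    simp only [Matrix.mul_assoc] at hkey ⊢
    exact hkey
  have expand : (1 + C * P⁻¹ * Cᵀ) * (1 - C * S⁻¹ * Cᵀ)
      = 1 - C * S⁻¹ * Cᵀ + C * P⁻¹ * Cᵀ - (C * P⁻¹ * Cᵀ) * (C * S⁻¹ * Cᵀ) := by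
    noncomm_ring
  rw [expand, hAB]
  abel

theorem stmt16 {m n q : ℕ}
    (F C : ℕ → Matrix (Fin m) (Fin n) ℝ) (Hm : ℕ → Matrix (Fin q) (Fin n) ℝ)
    (hrank : ∀ k, (Matrix.fromRows (F k) (Hm k)).rank = n)
    (P Pkk : ℕ → Matrix (Fin n) (Fin n) ℝ)
    (hP0 : P 0 = (F 0)ᵀ * F 0 + (Hm 0)ᵀ * Hm 0)
    (hPk : ∀ k, P (k + 1) = (Hm (k + 1))ᵀ * Hm (k + 1)
      + (F (k + 1))ᵀ * (1 - C k * (P k + (C k)ᵀ * C k)⁻¹ * (C k)ᵀ) * F (k + 1))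
    (hQ0 : (Pkk 0)⁻¹ = (F 0)ᵀ * F 0 + (Hm 0)ᵀ * Hm 0)
    (hQk : ∀ k, (Pkk (k + 1))⁻¹
      = (F (k + 1))ᵀ * (1 + C k * Pkk k * (C k)ᵀ)⁻¹ * F (k + 1)
        + (Hm (k + 1))ᵀ * Hm (k + 1)) :
    ∀ k, (P k).PosDef ∧ (P k)⁻¹ = Pkk k := by
  intro k
  induction k with
  | zero =>
    have hpd : (P 0).PosDef := by
      rw [hP0, add_comm]
      have := aux_posDef (F 0) (Hm 0) 1 Matrix.PosDef.one (hrank 0)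
      simpa using this
    refine ⟨hpd, ?_⟩
    have heq : P 0 = (Pkk 0)⁻¹ := by rw [hP0, hQ0]
    have hdet : IsUnit (Pkk 0)⁻¹.det := heq ▸ (Matrix.isUnit_iff_isUnit_det _).mp hpd.isUnit
    rw [heq, Matrix.nonsing_inv_nonsing_inv _ (Matrix.isUnit_nonsing_inv_det_iff.mp hdet)]
  | succ k ih =>
    obtain ⟨hpd, heq⟩ := ih
    have hw := aux_wood (P k) (C k) hpd
    have hM : ((1 : Matrix (Fin m) (Fin m) ℝ) + C k * (P k)⁻¹ * (C k)ᵀ).PosDef := by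
      apply Matrix.PosDef.add_posSemidef Matrix.PosDef.one
      have := hpd.inv.posSemidef.mul_mul_conjTranspose_same (C k)
      simpa [Matrix.conjTranspose_eq_transpose_of_trivial] using this
    have hPk1 : P (k + 1) = (Hm (k + 1))ᵀ * Hm (k + 1)
        + (F (k + 1))ᵀ * (1 + C k * (P k)⁻¹ * (C k)ᵀ)⁻¹ * F (k + 1) := by
      rw [hPk k, hw]
    have hpd1 : (P (k + 1)).PosDef := by
      rw [hPk1]
      exact aux_posDef (F (k+1)) (Hm (k+1)) _ hM.inv (hrank (k+1))
    refine ⟨hpd1, ?_⟩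
    have heq1 : P (k + 1) = (Pkk (k + 1))⁻¹ := by
      rw [hPk1, hQk k, ← heq, add_comm]
    have hdet : IsUnit (Pkk (k+1))⁻¹.det := heq1 ▸ (Matrix.isUnit_iff_isUnit_det _).mp hpd1.isUnit
    rw [heq1, Matrix.nonsing_inv_nonsing_inv _ (Matrix.isUnit_nonsing_inv_det_iff.mp hdet)]
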